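/- The function φ̃_v(x) = e^{x²/2} x^g L_v^{(g-1/2)}(-x²) satisfies the Schrödinger equation -φ̃_v''(x) + (x² + g(g-1)/x² - 2g - 1) φ̃_v(x) = Ẽ_v φ̃_v(x) on 0 < x < ∞, with Ẽ_v = -4(g + v + 1/2). -/

import Mathlib

open Polynomial

noncomputable def laguerre (n : ℕ) (α η : ℝ) : ℝ :=
  (1 / n.factorial) * ∑ k ∈ Finset.range (n + 1),
    ((ascPochhammer ℝ k).eval (-(n : ℝ)) / k.factorial) *
      (ascPochhammer ℝ (n - k)).eval (α + k + 1) * η ^ k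

noncomputable def bc (v : ℕ) (α : ℝ) (k : ℕ) : ℝ :=
  (1 / v.factorial) * ((ascPochhammer ℝ k).eval (-(v : ℝ)) / k.factorial) *
    (ascPochhammer ℝ (v - k)).eval (α + k + 1)

noncomputable def lagP (v : ℕ) (α : ℝ) : Polynomial ℝ :=
  ∑ k ∈ Finset.range (v + 1), Polynomial.C (bc v α k) * Polynomial.X ^ k

lemma laguerre_eq (v : ℕ) (α η : ℝ) : laguerre v α η = (lagP v α).eval η := by
  unfold laguerre lagP
  rw [Polynomial.eval_finset_sum, Finset.mul_sum]
  refine Finset.sum_congr rfl fun k _ => ?_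
  simp only [Polynomial.eval_mul, Polynomial.eval_C, Polynomial.eval_pow, Polynomial.eval_X, bc]
  ring

lemma lagP_coeff (v : ℕ) (α : ℝ) (n : ℕ) :
    (lagP v α).coeff n = if n ≤ v then bc v α n else 0 := by
  simp [lagP, Polynomial.finset_sum_coeff, Polynomial.coeff_C_mul, Polynomial.coeff_X_pow,
    Finset.sum_ite_eq' (Finset.range (v+1)) n, Nat.lt_succ_iff]

lemma bc_rec (v : ℕ) (α : ℝ) (n : ℕ) (hn : n < v) :
    ((n:ℝ)+1) * (α + n + 1) * bc v α (n+1) = ((n:ℝ) - v) * bc v α n := by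
  have h1 : (ascPochhammer ℝ (n+1)).eval (-(v:ℝ))
      = (ascPochhammer ℝ n).eval (-(v:ℝ)) * (-(v:ℝ) + n) := by
    rw [ascPochhammer_succ_right]
    simp
  have h2 : v - n = (v - n - 1) + 1 := by omega
  have h3 : (ascPochhammer ℝ (v-n)).eval (α + n + 1)
      = (α + n + 1) * (ascPochhammer ℝ (v - n - 1)).eval (α + (n+1) + 1) := by
    rw [h2, ascPochhammer_succ_left]
    simp only [Polynomial.eval_mul, Polynomial.eval_comp, Polynomial.eval_add,
      Polynomial.eval_X, Polynomial.eval_one]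
    congr 2
    push_cast
    ring
  have h4 : v - (n+1) = v - n - 1 := by omega
  have hf : ((n+1).factorial : ℝ) = (n+1) * n.factorial := by
    rw [Nat.factorial_succ]; push_cast; ring
  unfold bc
  rw [h1, h3, h4, hf]
  have hnf : (n.factorial : ℝ) ≠ 0 := Nat.cast_ne_zero.mpr (Nat.factorial_ne_zero n)
  have hvf : (v.factorial : ℝ) ≠ 0 := Nat.cast_ne_zero.mpr (Nat.factorial_ne_zero v)
  have hn1 : ((n:ℝ)+1) ≠ 0 := by positivity
  push_cast
  field_simp
  ring

lemma step (v : ℕ) (α : ℝ) (n : ℕ) :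
    ((n:ℝ)+1) * (α + n + 1) * (lagP v α).coeff (n+1)
      + ((v:ℝ) - n) * (lagP v α).coeff n = 0 := by
  rw [lagP_coeff, lagP_coeff]
  rcases lt_trichotomy n v with h | h | h
  · rw [if_pos (by omega), if_pos (by omega)]
    linear_combination bc_rec v α n h
  · subst h
    rw [if_neg (by omega), if_pos le_rfl]
    ring
  · rw [if_neg (by omega), if_neg (by omega)]
    ring

lemma lagODE (v : ℕ) (α : ℝ) :
    X * derivative (derivative (lagP v α)) + (C (α+1) - X) * derivative (lagP v α)
      + C (v:ℝ) * lagP v α = 0 := by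
  ext n
  rcases n with _ | m
  · simp only [coeff_add, coeff_zero, sub_mul, coeff_sub, coeff_C_mul, mul_coeff_zero,
      coeff_X_zero, coeff_derivative, zero_mul, coeff_C_zero]
    have h := step v α 0
    push_cast at h ⊢
    linear_combination h
  · simp only [coeff_add, coeff_zero, sub_mul, coeff_sub, coeff_C_mul, coeff_X_mul,
      coeff_derivative, coeff_C_zero]
    have h := step v α (m+1)
    push_cast at h ⊢
    linear_combination h

lemma keyD (c : ℝ) (Q : Polynomial ℝ) {x : ℝ} (hx : 0 < x) :
    HasDerivAt (fun t : ℝ => Real.exp (t^2 / 2) * t ^ c * Q.eval (-(t^2)))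
      (Real.exp (x^2/2) * x ^ (c+1) * (Q - 2 * Polynomial.derivative Q).eval (-(x^2))
        + c * (Real.exp (x^2/2) * x ^ (c-1) * Q.eval (-(x^2)))) x := by
  have h1 : HasDerivAt (fun t : ℝ => Real.exp (t^2/2)) (Real.exp (x^2/2) * x) x := by
    have := ((hasDerivAt_pow 2 x).div_const 2).exp
    convert this using 1
    norm_num
  have h2 : HasDerivAt (fun t : ℝ => t ^ c) (c * x ^ (c-1)) x :=
    Real.hasDerivAt_rpow_const (Or.inl hx.ne')
  have h3 : HasDerivAt (fun t : ℝ => Q.eval (-(t^2))) (Q.derivative.eval (-(x^2)) * (-(2*x))) x := by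
    have := (Polynomial.hasDerivAt Q (-(x^2))).comp x ((hasDerivAt_pow 2 x).neg)
    refine this.congr_deriv ?_
    norm_num
  have h := (h1.mul h2).mul h3
  refine h.congr_deriv ?_
  have hx1 : x ^ (c+1) = x ^ c * x := Real.rpow_add_one hx.ne' c
  simp only [hx1, Polynomial.eval_sub, Polynomial.eval_mul, Polynomial.eval_ofNat, Pi.mul_apply]
  ring

theorem virtual_state_L1 (g : ℝ) (hg : 1/2 < g) (v : ℕ) (x : ℝ) (hx : 0 < x) :
    -deriv (deriv (fun t => Real.exp (t^2 / 2) * t ^ g * laguerre v (g - 1/2) (-(t^2)))) x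
        + (x^2 + g * (g - 1) / x^2 - 2*g - 1)
          * (Real.exp (x^2 / 2) * x ^ g * laguerre v (g - 1/2) (-(x^2)))
      = (-4 * (g + v + 1/2))
          * (Real.exp (x^2 / 2) * x ^ g * laguerre v (g - 1/2) (-(x^2))) := by
  set Q : Polynomial ℝ := lagP v (g - 1/2) with hQ
  set Q1 : Polynomial ℝ := Q - 2 * Polynomial.derivative Q with hQ1
  have hfun : (fun t => Real.exp (t^2 / 2) * t ^ g * laguerre v (g - 1/2) (-(t^2)))
      = (fun t : ℝ => Real.exp (t^2 / 2) * t ^ g * Q.eval (-(t^2))) := by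
    funext t; rw [laguerre_eq]
  rw [hfun, laguerre_eq, ← hQ]
  set G : ℝ → ℝ := fun t => Real.exp (t^2/2) * t ^ (g+1) * Q1.eval (-(t^2))
        + g * (Real.exp (t^2/2) * t ^ (g-1) * Q.eval (-(t^2))) with hG
  have hev : deriv (fun t : ℝ => Real.exp (t^2 / 2) * t ^ g * Q.eval (-(t^2))) =ᶠ[nhds x] G := by
    filter_upwards [isOpen_Ioi.mem_nhds (show x ∈ Set.Ioi 0 from hx)] with y hy
    exact (keyD g Q hy).deriv
  rw [hev.deriv_eq]
  have hG' : HasDerivAt G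
      ((Real.exp (x^2/2) * x ^ ((g+1)+1) * (Q1 - 2 * Polynomial.derivative Q1).eval (-(x^2))
        + (g+1) * (Real.exp (x^2/2) * x ^ ((g+1)-1) * Q1.eval (-(x^2))))
       + g * (Real.exp (x^2/2) * x ^ ((g-1)+1) * (Q - 2 * Polynomial.derivative Q).eval (-(x^2))
        + (g-1) * (Real.exp (x^2/2) * x ^ ((g-1)-1) * Q.eval (-(x^2))))) x :=
    (keyD (g+1) Q1 hx).add ((keyD (g-1) Q hx).const_mul g)
  rw [hG'.deriv]
  have hode := congrArg (Polynomial.eval (-(x^2))) (lagODE v (g - 1/2))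
  simp only [Polynomial.eval_add, Polynomial.eval_mul, Polynomial.eval_sub, Polynomial.eval_C,
    Polynomial.eval_X, Polynomial.eval_zero, ← hQ] at hode
  have hsplit : ∀ (a : ℝ) (n : ℕ), a = (g-2) + n → x ^ a = x ^ (g-2) * x ^ n := by
    intro a n h
    rw [h, Real.rpow_add hx, Real.rpow_natCast]
  rw [hsplit ((g+1)+1) 4 (by push_cast; ring), hsplit ((g+1)-1) 2 (by push_cast; ring),
    hsplit ((g-1)+1) 2 (by push_cast; ring), hsplit ((g-1)-1) 0 (by push_cast; ring),
    hsplit g 2 (by push_cast; ring)]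
  simp only [hQ1, Polynomial.derivative_sub, Polynomial.derivative_mul,
    Polynomial.derivative_ofNat, Polynomial.eval_sub, Polynomial.eval_mul,
    Polynomial.eval_ofNat, Polynomial.eval_add, zero_mul, zero_add]
  have hx0 : x ≠ 0 := hx.ne'
  field_simp
  linear_combination (8 * x^2) * hode
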